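/- Let u ≥ v ≥ 1 be integers. For every natural number n, μ(𝒯^{(u,v)}(2n+1)) equals the (2,1) entry of the matrix (L_u R_v)^n L_u. -/
import Mathlib

open Matrix Finset

def Lm (u : ℕ) : Matrix (Fin 2) (Fin 2) ℕ := !![1, 0; u, 1]
def Rm (v : ℕ) : Matrix (Fin 2) (Fin 2) ℕ := !![1, v; 0, 1]

/-- The product of the matrices corresponding to a word: `false ↦ L_u`, `true ↦ R_v`. -/
def wordProd (u v : ℕ) (w : List Bool) : Matrix (Fin 2) (Fin 2) ℕ :=
  (w.map (fun b => if b then Rm v else Lm u)).prod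

/-- μ of a matrix: maximum of the four entries. -/
def matMax (M : Matrix (Fin 2) (Fin 2) ℕ) : ℕ :=
  max (max (M 0 0) (M 0 1)) (max (M 1 0) (M 1 1))

/-- μ(𝒯^{(u,v)}(I₂;n)): maximum of μ over all products of exactly n matrices each L_u or R_v. -/
def levelMax (u v n : ℕ) : ℕ :=
  Finset.univ.sup (fun w : Fin n → Bool => matMax (wordProd u v (List.ofFn w)))

section Aux

lemma iCLL (u v a b g : ℤ) (hv : 1 ≤ v) (huv : v ≤ u) (ha : 0 ≤ a) (hb : 0 ≤ b) (hg : 0 ≤ g)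
    (h1 : u*b = v*g) :
    a + v*g + 2*(u*b) + 2*(u*(v*(a + u*b))) ≤
      g + 2*(u*(a + u*b)) + u*(v*g) + u*(u*(v*(a + u*b))) := by
  have hu1 : (0:ℤ) ≤ u - 1 := by linarith
  rcases le_or_gt 2 u with hu2 | hu2
  · have c2 : (0:ℤ) ≤ u - 2 := by linarith
    nlinarith [mul_nonneg (mul_nonneg (mul_nonneg ha (by linarith : (0:ℤ) ≤ u)) (by linarith : (0:ℤ) ≤ v)) c2,
      mul_nonneg (mul_nonneg (mul_nonneg (mul_nonneg (by linarith : (0:ℤ) ≤ u) hb) (by linarith : (0:ℤ) ≤ u)) (by linarith : (0:ℤ) ≤ v)) c2,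
      mul_nonneg ha hu1, mul_nonneg ha (by linarith : (0:ℤ) ≤ u),
      mul_nonneg (mul_nonneg (by linarith : (0:ℤ) ≤ u) hb) hu1,
      mul_nonneg (mul_nonneg hg (by linarith : (0:ℤ) ≤ v)) hu1]
  · have hu : u = 1 := by omega
    have hvv : v = 1 := by omega
    subst hu; subst hvv; nlinarith [hb, hg, h1, ha]

lemma iCRL0 (u v a b g : ℤ) (hv : 1 ≤ v) (huv : v ≤ u) (ha : 0 ≤ a) (hb : 0 ≤ b) (hg : 0 ≤ g)
    (h1 : u*b = v*g) :
    (u*v+1)*(a + v*g) + u*b + u*(v*(a + u*b)) ≤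
      g + 2*(u*(a + u*b)) + u*(v*g) + u*(u*(v*(a + u*b))) := by
  have e3 : (u*v)*(u*b) = (u*v)*(v*g) := by rw [h1]
  have hu1 : (0:ℤ) ≤ u - 1 := by linarith
  rcases le_or_gt 2 u with hu2 | hu2
  · have c2 : (0:ℤ) ≤ u - 2 := by linarith
    nlinarith [e3, mul_nonneg (mul_nonneg (mul_nonneg ha (by linarith : (0:ℤ) ≤ u)) (by linarith : (0:ℤ) ≤ v)) c2,
      mul_nonneg (mul_nonneg (mul_nonneg (mul_nonneg (by linarith : (0:ℤ) ≤ u) hb) (by linarith : (0:ℤ) ≤ u)) (by linarith : (0:ℤ) ≤ v)) c2,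
      mul_nonneg ha hu1, mul_nonneg ha (by linarith : (0:ℤ) ≤ u),
      mul_nonneg (mul_nonneg (by linarith : (0:ℤ) ≤ u) hb) hu1,
      mul_nonneg (mul_nonneg hg (by linarith : (0:ℤ) ≤ v)) hu1, hg]
  · have hu : u = 1 := by omega
    have hvv : v = 1 := by omega
    subst hu; subst hvv; nlinarith [hb, hg, h1, ha]

lemma iCRL1 (u v a b g : ℤ) (hv : 1 ≤ v) (huv : v ≤ u) (ha : 0 ≤ a) (hb : 0 ≤ b) (hg : 0 ≤ g)
    (h1 : u*b = v*g) :
    v*a + v*(v*g) + b + v*(a + u*b) ≤ v*g + u*(v*(a + u*b)) + (a + u*b) := by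
  have e2 : v*(u*b) = v*(v*g) := by rw [h1]
  have hu1 : (0:ℤ) ≤ u - 1 := by linarith
  rcases le_or_gt 2 u with hu2 | hu2
  · have c2 : (0:ℤ) ≤ u - 2 := by linarith
    nlinarith [e2, mul_nonneg (mul_nonneg ha (by linarith : (0:ℤ) ≤ v)) c2,
      mul_nonneg (mul_nonneg (mul_nonneg hb (by linarith : (0:ℤ) ≤ u)) (by linarith : (0:ℤ) ≤ v)) c2,
      mul_nonneg hb hu1,
      mul_nonneg (mul_nonneg hg (by linarith : (0:ℤ) ≤ v)) hu1, hg,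
      mul_nonneg hg (by linarith : (0:ℤ) ≤ v)]
  · have hu : u = 1 := by omega
    have hvv : v = 1 := by omega
    subst hu; subst hvv; nlinarith [hb, hg, h1, ha]

def aE (u v n : ℕ) : ℕ := ((Lm u * Rm v)^n) 0 0
def bE (u v n : ℕ) : ℕ := ((Lm u * Rm v)^n) 0 1
def gE (u v n : ℕ) : ℕ := ((Lm u * Rm v)^n) 1 0
def hE (u v n : ℕ) : ℕ := ((Lm u * Rm v)^n) 1 1

lemma aE_zero (u v : ℕ) : aE u v 0 = 1 := by simp [aE, Matrix.one_apply]
lemma bE_zero (u v : ℕ) : bE u v 0 = 0 := by simp [bE, Matrix.one_apply]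
lemma gE_zero (u v : ℕ) : gE u v 0 = 0 := by simp [gE, Matrix.one_apply]
lemma hE_zero (u v : ℕ) : hE u v 0 = 1 := by simp [hE, Matrix.one_apply]

lemma aE_succ (u v n : ℕ) : aE u v (n+1) = aE u v n + u * bE u v n := by
  simp [aE, bE, pow_succ, Matrix.mul_apply, Fin.sum_univ_two, Lm, Rm]; ring
lemma bE_succ (u v n : ℕ) : bE u v (n+1) = v * aE u v n + (u*v+1) * bE u v n := by
  simp [aE, bE, pow_succ, Matrix.mul_apply, Fin.sum_univ_two, Lm, Rm]; ring
lemma gE_succ (u v n : ℕ) : gE u v (n+1) = gE u v n + u * hE u v n := by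
  simp [gE, hE, pow_succ, Matrix.mul_apply, Fin.sum_univ_two, Lm, Rm]; ring
lemma hE_succ (u v n : ℕ) : hE u v (n+1) = v * gE u v n + (u*v+1) * hE u v n := by
  simp [gE, hE, pow_succ, Matrix.mul_apply, Fin.sum_univ_two, Lm, Rm]; ring

lemma wordProd_append (u v : ℕ) (l1 l2 : List Bool) :
    wordProd u v (l1 ++ l2) = wordProd u v l1 * wordProd u v l2 := by
  simp [wordProd]

lemma keyFacts (u v : ℕ) (hv : 1 ≤ v) (huv : v ≤ u) (n : ℕ) :
    u * bE u v n = v * gE u v n ∧ hE u v n = aE u v n + u * bE u v n ∧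
      gE u v n ≤ hE u v n := by
  induction n with
  | zero => simp [aE_zero, bE_zero, gE_zero, hE_zero]
  | succ n ih =>
    obtain ⟨h1, h2, h3⟩ := ih
    rw [aE_succ, bE_succ, gE_succ, hE_succ]
    set a := aE u v n; set b := bE u v n; set g := gE u v n; set h := hE u v n
    refine ⟨?_, ?_, ?_⟩
    · zify at h1 h2 ⊢; linear_combination h1 - (u*v) * h2
    · zify at h1 h2 ⊢; linear_combination (u*v+1) * h2 - h1
    · have e1 : 1*g ≤ v*g := Nat.mul_le_mul_right g hv
      have e2 : u*(1*h) ≤ u*(v*h) := Nat.mul_le_mul_left u (Nat.mul_le_mul_right h hv)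
      nlinarith [e1, e2]

def Dom (u v n x y : ℕ) : Prop :=
  (x ≤ gE u v n + u * hE u v n ∧ y ≤ hE u v n) ∨
  (x ≤ u * aE u v n + gE u v n ∧ y ≤ u * bE u v n + hE u v n) ∨
  (x ≤ aE u v n + v * gE u v n ∧ y ≤ bE u v n + v * hE u v n)

set_option maxHeartbeats 1600000 in
lemma dom_main (u v : ℕ) (hv : 1 ≤ v) (huv : v ≤ u) :
    ∀ n (w : List Bool), w.length = 2*n+1 → ∀ i : Fin 2,
      Dom u v n (wordProd u v w i 0) (wordProd u v w i 1) := by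
  have hu : 1 ≤ u := le_trans hv huv
  intro n
  induction n with
  | zero =>
    intro w hw i
    match w, hw with
    | [x], _ =>
      cases x <;> fin_cases i <;>
        simp [Dom, wordProd, Lm, Rm, aE_zero, bE_zero, gE_zero, hE_zero] <;> omega
  | succ n ih =>
    intro w hw i
    have hsplit : w = w.take (2*n+1) ++ w.drop (2*n+1) := (List.take_append_drop _ w).symm
    have hw' : (w.take (2*n+1)).length = 2*n+1 := by
      rw [List.length_take, hw]; omega
    have ht : (w.drop (2*n+1)).length = 2 := by rw [List.length_drop, hw]; omega
    obtain ⟨x, y, hxy⟩ : ∃ x y, w.drop (2*n+1) = [x, y] := by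
      match h : w.drop (2*n+1), ht with
      | [x, y], _ => exact ⟨x, y, rfl⟩
    rw [hsplit, hxy, wordProd_append]
    obtain ⟨h1, h2, h3⟩ := keyFacts u v hv huv n
    have hIH := ih (w.take (2*n+1)) hw' i
    set P := wordProd u v (w.take (2*n+1)) with hP
    set a := aE u v n with hadef; set b := bE u v n with hbdef
    set g := gE u v n with hgdef; set h := hE u v n with hhdef
    clear_value a b g h
    have E : ∀ j, (P * wordProd u v [x, y]) i j
        = P i 0 * wordProd u v [x, y] 0 j + P i 1 * wordProd u v [x, y] 1 j := by
      intro j; rw [Matrix.mul_apply, Fin.sum_univ_two]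
    rw [E 0, E 1]
    simp only [Dom, aE_succ, bE_succ, gE_succ, hE_succ] at hIH ⊢
    rw [← hadef, ← hbdef, ← hgdef, ← hhdef] at hIH ⊢
    set x0 := P i 0 with hx0def; set y0 := P i 1 with hy0def
    clear_value x0 y0
    have h1z : (u:ℤ)*b = v*g := by exact_mod_cast h1
    have h2z : (h:ℤ) = a + u*b := by exact_mod_cast h2
    have h3z : (g:ℤ) ≤ h := by exact_mod_cast h3
    have hvz : (1:ℤ) ≤ v := by exact_mod_cast hv
    have huvz : (v:ℤ) ≤ u := by exact_mod_cast huv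
    have huz : (1:ℤ) ≤ u := by exact_mod_cast hu
    have nA : (0:ℤ) ≤ (a:ℤ) := Int.natCast_nonneg a
    have nB : (0:ℤ) ≤ (b:ℤ) := Int.natCast_nonneg b
    have nG : (0:ℤ) ≤ (g:ℤ) := Int.natCast_nonneg g
    have nU0 : (0:ℤ) ≤ (u:ℤ) := by linarith
    have nV0 : (0:ℤ) ≤ (v:ℤ) := by linarith
    have nU1 : (0:ℤ) ≤ (u:ℤ) - 1 := by linarith
    have nUV : (0:ℤ) ≤ (u:ℤ)*v - 1 := by nlinarith [huz, hvz]
    have nH : (0:ℤ) ≤ (a:ℤ) + u*b := by positivity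
    have q1 : (u:ℤ)*(u*b) = u*(v*g) := by linear_combination (u:ℤ)*h1z
    have q2 : (v:ℤ)*(u*b) = v*(v*g) := by linear_combination (v:ℤ)*h1z
    have q4 : (u:ℤ)*u*v*(u*b) = u*u*v*(v*g) := by linear_combination ((u:ℤ)*u*v)*h1z
    clear E hx0def hy0def hadef hbdef hgdef hhdef hP hsplit hw hw' ht hxy ih h1 h2 h3
    clear P
    cases x <;> cases y <;>
      simp [wordProd, Lm, Rm, Matrix.mul_apply, Fin.sum_univ_two] <;>
    rcases hIH with ⟨hx, hy⟩ | ⟨hx, hy⟩ | ⟨hx, hy⟩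
    · -- block LL, case A
      refine Or.inl ⟨?_, ?_⟩
      · zify at hx hy ⊢
        rw [h2z] at hx hy ⊢
        linarith [hx, hy, mul_le_mul_of_nonneg_left hy (by positivity : (0:ℤ) ≤ (u:ℤ)+u), mul_nonneg nUV (mul_nonneg nU0 nH), mul_nonneg (mul_nonneg nU0 nV0) nG, h3z, hvz, huvz, huz]
      · zify at hx hy ⊢
        rw [h2z] at hx hy ⊢
        linarith [hx, hy, mul_nonneg nV0 nG, mul_nonneg (mul_nonneg nU0 nV0) nH, h3z, hvz, huvz, huz]
    · -- block LL, case B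
      refine Or.inl ⟨?_, ?_⟩
      · zify at hx hy ⊢
        rw [h2z] at hy ⊢
        linarith [hx, hy, mul_le_mul_of_nonneg_left hy (by positivity : (0:ℤ) ≤ (u:ℤ)+u), q1, q4, mul_nonneg nUV (mul_nonneg nU0 nA), mul_nonneg nUV (mul_nonneg nU0 (mul_nonneg nV0 nG)), h3z, hvz, huvz, huz]
      · zify at hx hy ⊢
        rw [h2z] at hy ⊢
        linarith [hx, hy, h1z, mul_nonneg (mul_nonneg nU0 nV0) nA, mul_nonneg (mul_nonneg (mul_nonneg nU0 nU0) nV0) nB, h3z, hvz, huvz, huz]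
    · -- block LL, case C
      refine Or.inl ⟨?_, ?_⟩
      · zify at hx hy ⊢
        rw [h2z] at hy ⊢
        linarith [hx, hy, mul_le_mul_of_nonneg_left hy (by positivity : (0:ℤ) ≤ (u:ℤ)+u), iCLL (u:ℤ) v a b g hvz huvz nA nB nG h1z, h3z, hvz, huvz, huz]
      · zify at hx hy ⊢
        rw [h2z] at hy ⊢
        linarith [hx, hy, mul_nonneg (mul_nonneg nU1 nV0) nA, mul_nonneg (mul_nonneg (mul_nonneg nU1 nU0) nV0) nB, mul_nonneg nU1 nB, mul_nonneg nV0 nG, nA, h3z, hvz, huvz, huz]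
    · -- block LR, case A
      refine Or.inr (Or.inl ⟨?_, ?_⟩)
      · zify at hx hy ⊢
        rw [h2z] at hx hy ⊢
        linarith [hx, hy, mul_le_mul_of_nonneg_left hy (by positivity : (0:ℤ) ≤ (u:ℤ)), h3z, hvz, huvz, huz]
      · zify at hx hy ⊢
        rw [h2z] at hx hy ⊢
        linarith [hx, hy, mul_le_mul_of_nonneg_left hx (by positivity : (0:ℤ) ≤ (v:ℤ)), mul_le_mul_of_nonneg_left hy (by positivity : (0:ℤ) ≤ (v:ℤ)*u+1), mul_nonneg nU0 nB, h3z, hvz, huvz, huz]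
    · -- block LR, case B
      refine Or.inr (Or.inl ⟨?_, ?_⟩)
      · zify at hx hy ⊢
        rw [h2z] at hy ⊢
        linarith [hx, hy, mul_le_mul_of_nonneg_left hy (by positivity : (0:ℤ) ≤ (u:ℤ)), h3z, hvz, huvz, huz]
      · zify at hx hy ⊢
        rw [h2z] at hy ⊢
        linarith [hx, hy, mul_le_mul_of_nonneg_left hx (by positivity : (0:ℤ) ≤ (v:ℤ)), mul_le_mul_of_nonneg_left hy (by positivity : (0:ℤ) ≤ (v:ℤ)*u+1), h3z, hvz, huvz, huz]
    · -- block LR, case C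
      refine Or.inr (Or.inr ⟨?_, ?_⟩)
      · zify at hx hy ⊢
        rw [h2z] at hy ⊢
        linarith [hx, hy, mul_le_mul_of_nonneg_left hy (by positivity : (0:ℤ) ≤ (u:ℤ)), h3z, hvz, huvz, huz]
      · zify at hx hy ⊢
        rw [h2z] at hy ⊢
        linarith [hx, hy, mul_le_mul_of_nonneg_left hx (by positivity : (0:ℤ) ≤ (v:ℤ)), mul_le_mul_of_nonneg_left hy (by positivity : (0:ℤ) ≤ (v:ℤ)*u+1), h3z, hvz, huvz, huz]
    · -- block RL, case A
      refine Or.inl ⟨?_, ?_⟩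
      · zify at hx hy ⊢
        rw [h2z] at hx hy ⊢
        linarith [hx, hy, mul_le_mul_of_nonneg_left hx (by positivity : (0:ℤ) ≤ 1+(v:ℤ)*u), mul_le_mul_of_nonneg_left hy (by positivity : (0:ℤ) ≤ (u:ℤ)), h3z, hvz, huvz, huz]
      · zify at hx hy ⊢
        rw [h2z] at hx hy ⊢
        linarith [hx, hy, mul_le_mul_of_nonneg_left hx (by positivity : (0:ℤ) ≤ (v:ℤ)), h3z, hvz, huvz, huz]
    · -- block RL, case B
      refine Or.inl ⟨?_, ?_⟩
      · zify at hx hy ⊢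
        rw [h2z] at hy ⊢
        linarith [hx, hy, mul_le_mul_of_nonneg_left hx (by positivity : (0:ℤ) ≤ 1+(v:ℤ)*u), mul_le_mul_of_nonneg_left hy (by positivity : (0:ℤ) ≤ (u:ℤ)), mul_nonneg (mul_nonneg (mul_nonneg nU0 nU0) (mul_nonneg nU0 nV0)) nB, h3z, hvz, huvz, huz]
      · zify at hx hy ⊢
        rw [h2z] at hy ⊢
        linarith [hx, hy, mul_le_mul_of_nonneg_left hx (by positivity : (0:ℤ) ≤ (v:ℤ)), mul_nonneg nUV (mul_nonneg nU0 nB), h3z, hvz, huvz, huz]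
    · -- block RL, case C
      refine Or.inl ⟨?_, ?_⟩
      · zify at hx hy ⊢
        rw [h2z] at hy ⊢
        linarith [hx, hy, mul_le_mul_of_nonneg_left hx (by positivity : (0:ℤ) ≤ 1+(v:ℤ)*u), mul_le_mul_of_nonneg_left hy (by positivity : (0:ℤ) ≤ (u:ℤ)), iCRL0 (u:ℤ) v a b g hvz huvz nA nB nG h1z, h3z, hvz, huvz, huz]
      · zify at hx hy ⊢
        rw [h2z] at hy ⊢
        linarith [hx, hy, mul_le_mul_of_nonneg_left hx (by positivity : (0:ℤ) ≤ (v:ℤ)), iCRL1 (u:ℤ) v a b g hvz huvz nA nB nG h1z, h3z, hvz, huvz, huz]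
    · -- block RR, case A
      refine Or.inr (Or.inl ⟨?_, ?_⟩)
      · zify at hx hy ⊢
        rw [h2z] at hx hy ⊢
        linarith [hx, hy, mul_nonneg nU0 nH, h3z, hvz, huvz, huz]
      · zify at hx hy ⊢
        rw [h2z] at hx hy ⊢
        linarith [hx, hy, mul_le_mul_of_nonneg_left hx (by positivity : (0:ℤ) ≤ (v:ℤ)+v), h1z, h3z, hvz, huvz, huz]
    · -- block RR, case B
      refine Or.inr (Or.inl ⟨?_, ?_⟩)
      · zify at hx hy ⊢
        rw [h2z] at hy ⊢
        linarith [hx, hy, mul_nonneg nU0 nA, mul_nonneg (mul_nonneg nU0 nU0) nB, h3z, hvz, huvz, huz]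
      · zify at hx hy ⊢
        rw [h2z] at hy ⊢
        linarith [hx, hy, mul_le_mul_of_nonneg_left hx (by positivity : (0:ℤ) ≤ (v:ℤ)+v), h1z, mul_nonneg nUV (mul_nonneg nU0 nB), mul_nonneg nU0 nB, h3z, hvz, huvz, huz]
    · -- block RR, case C
      refine Or.inr (Or.inr ⟨?_, ?_⟩)
      · zify at hx hy ⊢
        rw [h2z] at hy ⊢
        linarith [hx, hy, mul_nonneg nU0 nB, mul_nonneg (mul_nonneg nU0 nV0) nH, h3z, hvz, huvz, huz]
      · zify at hx hy ⊢
        rw [h2z] at hy ⊢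
        linarith [hx, hy, mul_le_mul_of_nonneg_left hx (by positivity : (0:ℤ) ≤ (v:ℤ)+v), q2, mul_nonneg nUV (mul_nonneg nV0 nA), mul_nonneg (mul_nonneg (mul_nonneg nU0 nU0) (mul_nonneg nV0 nV0)) nB, h3z, hvz, huvz, huz]

end Aux


lemma dom_bound (u v : ℕ) (hv : 1 ≤ v) (huv : v ≤ u) (n x y : ℕ)
    (hd : Dom u v n x y) :
    x ≤ gE u v n + u * hE u v n ∧ y ≤ gE u v n + u * hE u v n := by
  obtain ⟨h1, h2, h3⟩ := keyFacts u v hv huv n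
  have hu : 1 ≤ u := le_trans hv huv
  have ha : aE u v n ≤ hE u v n := h2 ▸ Nat.le_add_right _ _
  have hbg : bE u v n ≤ gE u v n := by
    have h4 : u * bE u v n ≤ u * gE u v n := h1 ▸ Nat.mul_le_mul_right _ huv
    exact Nat.le_of_mul_le_mul_left h4 (by omega)
  have hhu : hE u v n ≤ u * hE u v n := Nat.le_mul_of_pos_left _ (by omega)
  have key : v * gE u v n + hE u v n ≤ gE u v n + u * hE u v n := by
    zify
    have c1 : (0:ℤ) ≤ (u:ℤ) - v := by
      have : (v:ℤ) ≤ u := by exact_mod_cast huv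
      linarith
    have c2 : (0:ℤ) ≤ (v:ℤ) - 1 := by
      have : (1:ℤ) ≤ v := by exact_mod_cast hv
      linarith
    have c3 : (0:ℤ) ≤ (hE u v n :ℤ) - gE u v n := by
      have : (gE u v n:ℤ) ≤ hE u v n := by exact_mod_cast h3
      linarith
    nlinarith [mul_nonneg c1 (Int.natCast_nonneg (hE u v n)), mul_nonneg c2 c3]
  rcases hd with ⟨hx, hy⟩ | ⟨hx, hy⟩ | ⟨hx, hy⟩
  · exact ⟨hx, le_trans hy (le_trans hhu (Nat.le_add_left _ _))⟩
  · refine ⟨?_, ?_⟩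
    · have h5 : u * aE u v n ≤ u * hE u v n := Nat.mul_le_mul_left u ha
      calc x ≤ u * aE u v n + gE u v n := hx
        _ ≤ u * hE u v n + gE u v n := Nat.add_le_add_right h5 _
        _ = gE u v n + u * hE u v n := Nat.add_comm _ _
    · calc y ≤ u * bE u v n + hE u v n := hy
        _ = v * gE u v n + hE u v n := by rw [h1]
        _ ≤ gE u v n + u * hE u v n := key
  · refine ⟨?_, ?_⟩
    · calc x ≤ aE u v n + v * gE u v n := hx
        _ = aE u v n + u * bE u v n := by rw [h1]
        _ = hE u v n := h2.symm
        _ ≤ gE u v n + u * hE u v n := le_trans hhu (Nat.le_add_left _ _)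
    · calc y ≤ bE u v n + v * hE u v n := hy
        _ ≤ gE u v n + u * hE u v n := Nat.add_le_add hbg (Nat.mul_le_mul_right _ huv)

def altL : ℕ → List Bool
  | 0 => [false]
  | n+1 => altL n ++ [true, false]

lemma altL_length (n : ℕ) : (altL n).length = 2*n+1 := by
  induction n with
  | zero => simp [altL]
  | succ n ih => simp [altL, ih]; omega

lemma altL_prod (u v n : ℕ) : wordProd u v (altL n) = (Lm u * Rm v)^n * Lm u := by
  induction n with
  | zero => simp [altL, wordProd]
  | succ n ih =>
    have h2 : wordProd u v [true, false] = Rm v * Lm u := by simp [wordProd]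
    rw [altL, wordProd_append, ih, h2, pow_succ]
    simp only [mul_assoc]

lemma ofFn_get_cast {α : Type*} (l : List α) (m : ℕ) (h : l.length = m) :
    List.ofFn (fun i : Fin m => l.get (Fin.cast h.symm i)) = l := by
  subst h
  simpa using List.ofFn_get l


theorem stmt1 (u v : ℕ) (hv : 1 ≤ v) (huv : v ≤ u) (n : ℕ) :
    levelMax u v (2 * n + 1) = ((Lm u * Rm v) ^ n * Lm u) 1 0 := by
  have hu : 1 ≤ u := le_trans hv huv
  have entry : ((Lm u * Rm v) ^ n * Lm u) 1 0 = gE u v n + u * hE u v n := by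
    rw [Matrix.mul_apply, Fin.sum_univ_two]
    simp [Lm, gE, hE]
    ring
  rw [entry]
  apply le_antisymm
  · apply Finset.sup_le
    intro w _
    have hl : (List.ofFn w).length = 2*n+1 := by simp
    have hd0 := dom_bound u v hv huv n _ _ (dom_main u v hv huv n (List.ofFn w) hl 0)
    have hd1 := dom_bound u v hv huv n _ _ (dom_main u v hv huv n (List.ofFn w) hl 1)
    simp only [matMax]
    exact max_le (max_le hd0.1 hd0.2) (max_le hd1.1 hd1.2)
  · have hlen : (altL n).length = 2*n+1 := altL_length n
    set w0 : Fin (2*n+1) → Bool := fun i => (altL n).get (Fin.cast hlen.symm i) with hw0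
    have hofn : List.ofFn w0 = altL n := ofFn_get_cast (altL n) (2*n+1) hlen
    have hle : matMax (wordProd u v (List.ofFn w0)) ≤ levelMax u v (2*n+1) :=
      Finset.le_sup (f := fun w : Fin (2*n+1) → Bool => matMax (wordProd u v (List.ofFn w))) (Finset.mem_univ w0)
    have hval : wordProd u v (List.ofFn w0) 1 0 = gE u v n + u * hE u v n := by
      rw [hofn, altL_prod, Matrix.mul_apply, Fin.sum_univ_two]
      simp [Lm, gE, hE]
      ring
    calc gE u v n + u * hE u v n = wordProd u v (List.ofFn w0) 1 0 := hval.symm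
      _ ≤ matMax (wordProd u v (List.ofFn w0)) := by
          simp only [matMax]
          exact le_max_of_le_right (le_max_left _ _)
      _ ≤ levelMax u v (2*n+1) := hle
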